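/- For algebraic curvature operators: (1) Q(R,S) lies in ⟨I⟩ if R,S ∈ ⟨I⟩; (2) Q(R,S) lies in ⟨Ric₀⟩ if R ∈ ⟨I⟩ and S ∈ ⟨Ric₀⟩; (3) Q(R,S)=0 if R ∈ ⟨I⟩ and S ∈ ⟨W⟩; (4) Q(R,S) ∈ ⟨W⟩ if R,S ∈ ⟨W⟩; (5) Q(R,S) ∈ ⟨Ric₀⟩ if R ∈ ⟨Ric₀⟩ and S ∈ ⟨W⟩. -/
import Mathlib


open scoped BigOperators

namespace PaperStmt

noncomputable section Work

variable {N : Type*} [Fintype N] [DecidableEq N]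

/-- Kronecker delta. -/
def kd (i j : N) : ℝ := if i = j then 1 else 0

/-- Algebraic curvature operator: antisymmetry in first and last pairs,
pair-interchange symmetry, and the first Bianchi identity. -/
def IsCurvOp (R : N → N → N → N → ℝ) : Prop :=
  (∀ i j k l, R j i k l = - R i j k l) ∧
  (∀ i j k l, R i j l k = - R i j k l) ∧
  (∀ i j k l, R k l i j = R i j k l) ∧
  (∀ i j k l, R i j k l + R j k i l + R k i j l = 0)

/-- Ricci tensor. -/
def ric (R : N → N → N → N → ℝ) (i j : N) : ℝ := ∑ k, R i k j k

/-- Scalar curvature. -/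
def scal (R : N → N → N → N → ℝ) : ℝ := ∑ i, ric R i i

/-- Inner product of symmetric 2-tensors. -/
def inner2 (A B : N → N → ℝ) : ℝ := ∑ i, ∑ j, A i j * B i j

def norm2sq (A : N → N → ℝ) : ℝ := inner2 A A

/-- Inner product of curvature operators: (1/4) Σ X_{ijkl} Y_{ijkl}. -/
def inner4 (X Y : N → N → N → N → ℝ) : ℝ :=
  (1/4) * ∑ i, ∑ j, ∑ k, ∑ l, X i j k l * Y i j k l

def norm4sq (X : N → N → N → N → ℝ) : ℝ := inner4 X X

/-- Wedge (Kulkarni–Nomizu type) product of symmetric endomorphisms. -/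
def wedge (A B : N → N → ℝ) (i j k l : N) : ℝ :=
  (1/2) * (A i k * B j l + B i k * A j l - A i l * B j k - A j k * B i l)

/-- Normalized scalar curvature λ̄ = scal/n. -/
def lam (n : ℕ) (R : N → N → N → N → ℝ) : ℝ := scal R / n

/-- Traceless Ricci tensor. -/
def ric0 (n : ℕ) (R : N → N → N → N → ℝ) (i j : N) : ℝ :=
  ric R i j - lam n R * kd i j

/-- Scalar-curvature part R_I = (λ̄/(n-1)) id∧id. -/
def RI (n : ℕ) (R : N → N → N → N → ℝ) (i j k l : N) : ℝ :=
  (lam n R / ((n : ℝ) - 1)) * wedge kd kd i j k l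

/-- Traceless-Ricci part R_{Ric₀} = (2/(n-2)) Ric₀ ∧ id. -/
def RRic0 (n : ℕ) (R : N → N → N → N → ℝ) (i j k l : N) : ℝ :=
  (2 / ((n : ℝ) - 2)) * wedge (ric0 n R) kd i j k l

/-- Weyl part W = R - R_I - R_{Ric₀}. -/
def weyl (n : ℕ) (R : N → N → N → N → ℝ) (i j k l : N) : ℝ :=
  R i j k l - RI n R i j k l - RRic0 n R i j k l

/-- Square of a curvature operator. -/
def csq (R : N → N → N → N → ℝ) (i j k l : N) : ℝ :=
  (1/2) * ∑ p, ∑ q, R i j p q * R k l p q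

/-- Hamilton's sharp operation R♯. -/
def sharp (R : N → N → N → N → ℝ) (i j k l : N) : ℝ :=
  ∑ p, ∑ q, (R i p k q * R j p l q - R i p l q * R j p k q)

/-- Hamilton's quadratic term Q(R) = R² + R♯. -/
def Q (R : N → N → N → N → ℝ) (i j k l : N) : ℝ := csq R i j k l + sharp R i j k l

/-- Square of a symmetric 2-tensor. -/
def matsq (A : N → N → ℝ) (i j : N) : ℝ := ∑ k, A i k * A k j

/-- Traceless part of a symmetric 2-tensor. -/
def tless (n : ℕ) (A : N → N → ℝ) (i j : N) : ℝ :=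
  A i j - ((∑ k, A k k) / n) * kd i j

/-- The scalar-curvature line ⟨I⟩. -/
def spanI (n : ℕ) : Set (Fin n → Fin n → Fin n → Fin n → ℝ) :=
  {R | ∃ c : ℝ, ∀ i j k l, R i j k l = c * wedge kd kd i j k l}

/-- The traceless-Ricci part ⟨Ric₀⟩: operators of the form `T ∧ id` with `T`
symmetric and trace-free. -/
def spanRic0 (n : ℕ) : Set (Fin n → Fin n → Fin n → Fin n → ℝ) :=
  {R | ∃ T : Fin n → Fin n → ℝ, (∀ i j, T i j = T j i) ∧ (∑ i, T i i = 0) ∧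
    ∀ i j k l, R i j k l = wedge T kd i j k l}

/-- The Weyl part ⟨W⟩: algebraic curvature operators with vanishing Ricci tensor. -/
def spanW (n : ℕ) : Set (Fin n → Fin n → Fin n → Fin n → ℝ) :=
  {R | IsCurvOp R ∧ ∀ i j, ric R i j = 0}

/-- Polarization `Q(R,S) = (1/2)(Q(R+S) - Q(R) - Q(S))` of Hamilton's quadratic term. -/
def Qbil {N : Type*} [Fintype N] (R S : N → N → N → N → ℝ) (i j k l : N) : ℝ :=
  (1/2) * (Q (fun a b c d => R a b c d + S a b c d) i j k l - Q R i j k l - Q S i j k l)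

set_option linter.unusedSectionVars false
set_option linter.unusedVariables false
set_option maxHeartbeats 1000000

-- ===== infrastructure =====

lemma kd_symm (a b : N) : kd a b = kd b a := by simp [kd, eq_comm]

lemma sum_kd_left (b : N) (f : N → ℝ) : (∑ q, kd b q * f q) = f b := by
  simp [kd, ite_mul, Finset.sum_ite_eq]

lemma sum_kd_left' (b : N) (f : N → ℝ) : (∑ q, kd q b * f q) = f b := by
  rw [show (∑ q, kd q b * f q) = ∑ q, kd b q * f q from
    Finset.sum_congr rfl fun q _ => by rw [kd_symm]]
  exact sum_kd_left b f

lemma sum_kd_diag : (∑ p : N, kd p p) = (Fintype.card N : ℝ) := by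
  simp [kd, Finset.card_univ]

lemma sum2_congr {f g : N → N → ℝ} (h : ∀ p q, f p q = g p q) :
    (∑ p, ∑ q, f p q) = ∑ p, ∑ q, g p q :=
  Finset.sum_congr rfl fun p _ => Finset.sum_congr rfl fun q _ => h p q

lemma sum2_swap (f : N → N → ℝ) : (∑ p, ∑ q, f p q) = ∑ p, ∑ q, f q p :=
  Finset.sum_comm

lemma sum2_add (f g : N → N → ℝ) :
    (∑ p, ∑ q, (f p q + g p q)) = (∑ p, ∑ q, f p q) + (∑ p, ∑ q, g p q) := by
  simp [Finset.sum_add_distrib]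

lemma sum2_symmetrize (f : N → N → ℝ) :
    (∑ p, ∑ q, f p q) = (1/2) * ∑ p, ∑ q, (f p q + f q p) := by
  rw [sum2_add, ← sum2_swap]; ring

lemma sum_cmul (a : ℝ) (f : N → ℝ) : (∑ p, a * f p) = a * ∑ p, f p :=
  (Finset.mul_sum _ _ _).symm

lemma sum2_cmul (a : ℝ) (f : N → N → ℝ) :
    (∑ p, ∑ q, a * f p q) = a * ∑ p, ∑ q, f p q := by
  rw [Finset.mul_sum]
  exact Finset.sum_congr rfl fun p _ => sum_cmul a (f p)

lemma dsum_kd_q (b : N) (f : N → N → ℝ) : (∑ p, ∑ q, kd b q * f p q) = ∑ p, f p b :=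
  Finset.sum_congr rfl fun p _ => sum_kd_left b (f p)

lemma dsum_kd_p (a : N) (f : N → N → ℝ) : (∑ p, ∑ q, kd a p * f p q) = ∑ q, f a q := by
  rw [sum2_swap (f := fun p q => kd a p * f p q)]
  exact Finset.sum_congr rfl fun q _ => sum_kd_left a (fun p => f p q)

lemma dsum_kd_pq (f : N → N → ℝ) : (∑ p, ∑ q, kd p q * f p q) = ∑ p, f p p :=
  Finset.sum_congr rfl fun p _ => sum_kd_left p (f p)

lemma ric_spec (X : N → N → N → N → ℝ) (a b : N) : (∑ p, X a p b p) = ric X a b := rfl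

lemma Qbil_eq (R S : N → N → N → N → ℝ) (i j k l : N) :
    Qbil R S i j k l =
      (1/4) * (∑ p, ∑ q, (R i j p q * S k l p q + S i j p q * R k l p q))
      + (1/2) * (∑ p, ∑ q, (R i p k q * S j p l q + S i p k q * R j p l q
          - R i p l q * S j p k q - S i p l q * R j p k q)) := by
  simp only [Qbil, Q, csq, sharp, add_mul, mul_add, sub_eq_add_neg, neg_add, neg_mul, mul_neg,
    Finset.sum_add_distrib, Finset.sum_neg_distrib]
  ring

-- ===== generic wedge-sum evaluation =====

lemma sumL (A : N → N → ℝ) (X : N → N → N → N → ℝ) (a b c d : N) :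
    (∑ p, ∑ q, wedge A kd a b p q * X c d p q)
    = (1/2) * ∑ p, (A a p * X c d p b + A b p * X c d a p
        - A a p * X c d b p - A b p * X c d p a) := by
  rw [show (∑ p, ∑ q, wedge A kd a b p q * X c d p q)
      = ∑ p, ∑ q, (kd b q * ((1/2) * (A a p * X c d p q))
        + kd a p * ((1/2) * (A b q * X c d p q))
        - kd b p * ((1/2) * (A a q * X c d p q))
        - kd a q * ((1/2) * (A b p * X c d p q))) from
    sum2_congr fun p q => by simp only [wedge]; ring]
  simp only [Finset.sum_add_distrib, Finset.sum_sub_distrib]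
  rw [dsum_kd_q b (fun p q => (1/2) * (A a p * X c d p q)),
      dsum_kd_p a (fun p q => (1/2) * (A b q * X c d p q)),
      dsum_kd_p b (fun p q => (1/2) * (A a q * X c d p q)),
      dsum_kd_q a (fun p q => (1/2) * (A b p * X c d p q))]
  simp only [sum_cmul]
  ring

lemma sumR (A : N → N → ℝ) (X : N → N → N → N → ℝ) (a b c d : N) :
    (∑ p, ∑ q, X a b p q * wedge A kd c d p q)
    = (1/2) * ∑ p, (A c p * X a b p d + A d p * X a b c p
        - A c p * X a b d p - A d p * X a b p c) := by
  rw [show (∑ p, ∑ q, X a b p q * wedge A kd c d p q)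
      = ∑ p, ∑ q, wedge A kd c d p q * X a b p q from
    sum2_congr fun p q => by ring]
  exact sumL A X c d a b

lemma sumSh1 (A : N → N → ℝ) (X : N → N → N → N → ℝ) (a b c d : N) :
    (∑ p, ∑ q, wedge A kd a p c q * X b p d q)
    = (1/2) * (A a c * ric X b d) + (1/2) * (kd a c * ∑ p, ∑ q, A p q * X b p d q)
      - (1/2) * ∑ p, (A a p * X b c d p + A p c * X b p d a) := by
  rw [show (∑ p, ∑ q, wedge A kd a p c q * X b p d q)
      = ∑ p, ∑ q, (kd p q * ((1/2) * A a c * X b p d q)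
        + (1/2) * (kd a c * (A p q * X b p d q))
        - kd c p * ((1/2) * (A a q * X b p d q))
        - kd a q * ((1/2) * (A p c * X b p d q))) from
    sum2_congr fun p q => by simp only [wedge]; rw [kd_symm p c]; ring]
  simp only [Finset.sum_add_distrib, Finset.sum_sub_distrib]
  rw [dsum_kd_pq (fun p q => (1/2) * A a c * X b p d q),
      dsum_kd_p c (fun p q => (1/2) * (A a q * X b p d q)),
      dsum_kd_q a (fun p q => (1/2) * (A p c * X b p d q))]
  simp only [sum_cmul]
  rw [ric_spec]
  ring

lemma sumSh2 (A : N → N → ℝ) (X : N → N → N → N → ℝ) (a b c d : N) :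
    (∑ p, ∑ q, X a p c q * wedge A kd b p d q)
    = (1/2) * (A b d * ric X a c) + (1/2) * (kd b d * ∑ p, ∑ q, A p q * X a p c q)
      - (1/2) * ∑ p, (A b p * X a d c p + A p d * X a p c b) := by
  rw [show (∑ p, ∑ q, X a p c q * wedge A kd b p d q)
      = ∑ p, ∑ q, (kd p q * ((1/2) * A b d * X a p c q)
        + (1/2) * (kd b d * (A p q * X a p c q))
        - kd d p * ((1/2) * (A b q * X a p c q))
        - kd b q * ((1/2) * (A p d * X a p c q))) from
    sum2_congr fun p q => by simp only [wedge]; rw [kd_symm p d]; ring]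
  simp only [Finset.sum_add_distrib, Finset.sum_sub_distrib]
  rw [dsum_kd_pq (fun p q => (1/2) * A b d * X a p c q),
      dsum_kd_p d (fun p q => (1/2) * (A b q * X a p c q)),
      dsum_kd_q b (fun p q => (1/2) * (A p d * X a p c q))]
  simp only [sum_cmul]
  rw [ric_spec]
  ring

-- kd specializations

lemma sumL_kd (X : N → N → N → N → ℝ) (a b c d : N) :
    (∑ p, ∑ q, wedge kd kd a b p q * X c d p q) = X c d a b - X c d b a := by
  rw [sumL]
  simp only [Finset.sum_add_distrib, Finset.sum_sub_distrib, sum_kd_left]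
  ring

lemma sumR_kd (X : N → N → N → N → ℝ) (a b c d : N) :
    (∑ p, ∑ q, X a b p q * wedge kd kd c d p q) = X a b c d - X a b d c := by
  rw [sumR]
  simp only [Finset.sum_add_distrib, Finset.sum_sub_distrib, sum_kd_left]
  ring

lemma sumSh1_kd (X : N → N → N → N → ℝ) (a b c d : N) :
    (∑ p, ∑ q, wedge kd kd a p c q * X b p d q)
      = kd a c * ric X b d - X b c d a := by
  rw [sumSh1, dsum_kd_pq (fun p q => X b p d q), ric_spec]
  simp only [Finset.sum_add_distrib, sum_kd_left, sum_kd_left']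
  ring

lemma sumSh2_kd (X : N → N → N → N → ℝ) (a b c d : N) :
    (∑ p, ∑ q, X a p c q * wedge kd kd b p d q)
      = kd b d * ric X a c - X a d c b := by
  rw [sumSh2, dsum_kd_pq (fun p q => X a p c q), ric_spec]
  simp only [Finset.sum_add_distrib, sum_kd_left, sum_kd_left']
  ring

lemma lemA (c : ℝ) (X : N → N → N → N → ℝ) (hX : IsCurvOp X) (i j k l : N) :
    Qbil (fun a b c' d => c * wedge kd kd a b c' d) X i j k l
      = c * wedge (ric X) kd i j k l := by
  obtain ⟨hX1, hX2, hX3, hX4⟩ := hX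
  simp only [Qbil_eq]
  rw [show (∑ p, ∑ q, (c * wedge kd kd i j p q * X k l p q
        + X i j p q * (c * wedge kd kd k l p q)))
      = ∑ p, ∑ q, c * (wedge kd kd i j p q * X k l p q
        + X i j p q * wedge kd kd k l p q) from sum2_congr fun p q => by ring,
    sum2_cmul, sum2_add, sumL_kd, sumR_kd]
  rw [show (∑ p, ∑ q, (c * wedge kd kd i p k q * X j p l q
        + X i p k q * (c * wedge kd kd j p l q)
        - c * wedge kd kd i p l q * X j p k q
        - X i p l q * (c * wedge kd kd j p k q)))
      = ∑ p, ∑ q, c * ((wedge kd kd i p k q * X j p l q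
        + X i p k q * wedge kd kd j p l q)
        - (wedge kd kd i p l q * X j p k q
        + X i p l q * wedge kd kd j p k q)) from sum2_congr fun p q => by ring,
    sum2_cmul]
  rw [show (∑ p, ∑ q, ((wedge kd kd i p k q * X j p l q + X i p k q * wedge kd kd j p l q)
        - (wedge kd kd i p l q * X j p k q + X i p l q * wedge kd kd j p k q)))
      = ((∑ p, ∑ q, wedge kd kd i p k q * X j p l q)
         + (∑ p, ∑ q, X i p k q * wedge kd kd j p l q))
        - ((∑ p, ∑ q, wedge kd kd i p l q * X j p k q)
         + (∑ p, ∑ q, X i p l q * wedge kd kd j p k q)) from by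
      simp only [Finset.sum_add_distrib, Finset.sum_sub_distrib]]
  rw [sumSh1_kd X i j k l, sumSh2_kd X i j k l, sumSh1_kd X i j l k, sumSh2_kd X i j l k]
  simp only [wedge]
  linear_combination ((1 : ℝ)/4) * c * (hX3 i j k l) + ((-1 : ℝ)/4) * c * (hX2 k l i j) + ((-1 : ℝ)/4) * c * (hX2 i j k l) + ((-1 : ℝ)/2) * c * (hX2 j k i l) + ((-1 : ℝ)/2) * c * (hX2 i l j k) + ((1 : ℝ)/2) * c * (hX2 j l i k) + ((1 : ℝ)/2) * c * (hX2 i k j l) + ((1 : ℝ)/4) * c * (hX3 i j k l) + ((1 : ℝ)/2) * c * (hX3 i l j k) + ((-1 : ℝ)/2) * c * (hX3 i k j l) + (1 : ℝ) * c * (hX4 i j k l) + (-1 : ℝ) * c * (hX3 i l j k) + (-1 : ℝ) * c * (hX1 i k j l)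

lemma sum_kd_right (b : N) (f : N → ℝ) : (∑ q, f q * kd b q) = f b := by
  rw [show (∑ q, f q * kd b q) = ∑ q, kd b q * f q from
    Finset.sum_congr rfl fun q _ => by ring]
  exact sum_kd_left b f

lemma sum_kd_right' (b : N) (f : N → ℝ) : (∑ q, f q * kd q b) = f b := by
  rw [show (∑ q, f q * kd q b) = ∑ q, kd q b * f q from
    Finset.sum_congr rfl fun q _ => by ring]
  exact sum_kd_left' b f

lemma wedge_isCurvOp (A B : N → N → ℝ) (hA : ∀ a b, A a b = A b a)
    (hB : ∀ a b, B a b = B b a) : IsCurvOp (wedge A B) := by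
  refine ⟨fun i j k l => ?_, fun i j k l => ?_, fun i j k l => ?_, fun i j k l => ?_⟩
  · simp only [wedge]; ring
  · simp only [wedge]; ring
  · simp only [wedge]
    linear_combination ((1 : ℝ)/2) * (B l j) * (hA k i) + ((1 : ℝ)/2) * (B k i) * (hA l j) + ((-1 : ℝ)/2) * (B l i) * (hA k j) + ((-1 : ℝ)/2) * (B k j) * (hA l i) + ((1 : ℝ)/2) * (A i k) * (hB l j) + ((1 : ℝ)/2) * (A j l) * (hB k i) + ((-1 : ℝ)/2) * (A j k) * (hB l i) + ((-1 : ℝ)/2) * (A i l) * (hB k j)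
  · simp only [wedge]
    linear_combination ((1 : ℝ)/2) * (B k l) * (hA j i) + ((1 : ℝ)/2) * (A k l) * (hB j i) + ((-1 : ℝ)/2) * (A j l) * (hB k i) + ((-1 : ℝ)/2) * (B j l) * (hA k i) + ((1 : ℝ)/2) * (B i l) * (hA k j) + ((1 : ℝ)/2) * (A i l) * (hB k j)

lemma smul_isCurvOp (c : ℝ) (X : N → N → N → N → ℝ) (hX : IsCurvOp X) :
    IsCurvOp (fun a b c' d => c * X a b c' d) := by
  obtain ⟨h1, h2, h3, h4⟩ := hX
  exact ⟨fun i j k l => by simp only []; linear_combination c * h1 i j k l,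
    fun i j k l => by simp only []; linear_combination c * h2 i j k l,
    fun i j k l => by simp only []; linear_combination c * h3 i j k l,
    fun i j k l => by simp only []; linear_combination c * h4 i j k l⟩

lemma ric_smul (c : ℝ) (X : N → N → N → N → ℝ) (a b : N) :
    ric (fun a' b' c' d' => c * X a' b' c' d') a b = c * ric X a b := by
  simp only [ric]
  exact sum_cmul c (fun k => X a k b k)

lemma ric_wedge (A : N → N → ℝ) (a b : N) :
    ric (wedge A kd) a b
      = (1/2) * ((Fintype.card N : ℝ) * A a b + kd a b * (∑ k, A k k) - 2 * A a b) := by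
  simp only [ric]
  rw [show (∑ k, wedge A kd a k b k)
      = ∑ k, ((1/2) * A a b * kd k k + (1/2) * (kd a b * A k k)
          - kd k b * ((1/2) * A a k) - kd a k * ((1/2) * A k b)) from
    Finset.sum_congr rfl fun k _ => by simp only [wedge]; ring]
  simp only [Finset.sum_add_distrib, Finset.sum_sub_distrib, sum_kd_left, sum_kd_left']
  simp only [sum_cmul]
  rw [sum_kd_diag]
  ring

lemma ric_wedge_kd (a b : N) :
    ric (wedge kd kd) a b = ((Fintype.card N : ℝ) - 1) * kd a b := by
  rw [ric_wedge, sum_kd_diag]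
  ring

lemma wedge_congr1 (A A' B : N → N → ℝ) (h : ∀ a b, A a b = A' a b) (i j k l : N) :
    wedge A B i j k l = wedge A' B i j k l := by
  simp only [wedge, h]




lemma part1 {n : ℕ} (R S : Fin n → Fin n → Fin n → Fin n → ℝ)
    (hR : R ∈ spanI n) (hS : S ∈ spanI n) : Qbil R S ∈ spanI n := by
  obtain ⟨c1, hR⟩ := hR
  obtain ⟨c2, hS⟩ := hS
  have hRe : R = fun a b c d => c1 * wedge kd kd a b c d := by
    funext a b c d; exact hR a b c d
  have hSe : S = fun a b c d => c2 * wedge kd kd a b c d := by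
    funext a b c d; exact hS a b c d
  subst hRe hSe
  refine ⟨c1 * c2 * ((n : ℝ) - 1), fun i j k l => ?_⟩
  rw [lemA c1 (fun a b c d => c2 * wedge kd kd a b c d) (smul_isCurvOp c2 (wedge kd kd) (wedge_isCurvOp kd kd kd_symm kd_symm)) i j k l]
  have hric : ∀ a b : Fin n, ric (fun a' b' c' d' => c2 * wedge kd kd a' b' c' d' : Fin n → Fin n → Fin n → Fin n → ℝ) a b
      = c2 * (((n : ℝ) - 1) * kd a b) := by
    intro a b
    rw [ric_smul, ric_wedge_kd, Fintype.card_fin]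
  rw [wedge_congr1 _ (fun a b => c2 * (((n : ℝ) - 1) * kd a b)) kd hric i j k l]
  simp only [wedge]
  ring

lemma part2 {n : ℕ} (R S : Fin n → Fin n → Fin n → Fin n → ℝ)
    (hR : R ∈ spanI n) (hS : S ∈ spanRic0 n) : Qbil R S ∈ spanRic0 n := by
  obtain ⟨c1, hR⟩ := hR
  obtain ⟨T, hT, hTr, hS⟩ := hS
  have hRe : R = fun a b c d => c1 * wedge kd kd a b c d := by
    funext a b c d; exact hR a b c d
  have hSe : S = fun a b c d => wedge T kd a b c d := by
    funext a b c d; exact hS a b c d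
  subst hRe hSe
  have hric : ∀ a b, ric (wedge T kd) a b = (((n : ℝ) - 2)/2) * T a b := by
    intro a b
    rw [ric_wedge, hTr, Fintype.card_fin]
    ring
  refine ⟨fun a b => c1 * ((((n : ℝ) - 2)/2) * T a b), fun a b => ?_, ?_, fun i j k l => ?_⟩
  · simp only []; rw [hT a b]
  · simp only []
    rw [show (∑ i, c1 * ((((n : ℝ) - 2)/2) * T i i))
        = (c1 * (((n : ℝ) - 2)/2)) * ∑ i, T i i from by
      rw [← sum_cmul]; exact Finset.sum_congr rfl fun i _ => by ring]
    rw [hTr]; ring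
  · rw [lemA c1 (wedge T kd) (wedge_isCurvOp T kd hT kd_symm) i j k l]
    rw [wedge_congr1 _ (fun a b => (((n : ℝ) - 2)/2) * T a b) kd hric i j k l]
    simp only [wedge]
    ring

lemma part3 {n : ℕ} (R S : Fin n → Fin n → Fin n → Fin n → ℝ)
    (hR : R ∈ spanI n) (hS : S ∈ spanW n) : ∀ i j k l, Qbil R S i j k l = 0 := by
  obtain ⟨c1, hR⟩ := hR
  obtain ⟨hSc, hric⟩ := hS
  have hRe : R = fun a b c d => c1 * wedge kd kd a b c d := by
    funext a b c d; exact hR a b c d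
  subst hRe
  intro i j k l
  rw [lemA c1 S hSc i j k l]
  rw [wedge_congr1 _ (fun _ _ => (0:ℝ)) kd hric i j k l]
  simp only [wedge]
  ring

lemma sum2_sub (f g : N → N → ℝ) :
    (∑ p, ∑ q, (f p q - g p q)) = (∑ p, ∑ q, f p q) - (∑ p, ∑ q, g p q) := by
  simp [Finset.sum_sub_distrib]

lemma sum3_congr {f g : N → N → N → ℝ} (h : ∀ a b c, f a b c = g a b c) :
    (∑ a, ∑ b, ∑ c, f a b c) = ∑ a, ∑ b, ∑ c, g a b c :=
  Finset.sum_congr rfl fun a _ => Finset.sum_congr rfl fun b _ =>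
    Finset.sum_congr rfl fun c _ => h a b c

lemma sum3_rot (f : N → N → N → ℝ) :
    (∑ a, ∑ b, ∑ c, f a b c) = ∑ b, ∑ c, ∑ a, f a b c := by
  rw [Finset.sum_comm]
  exact Finset.sum_congr rfl fun b _ => Finset.sum_comm

lemma sum3_p12 (f : N → N → N → ℝ) :
    (∑ a, ∑ b, ∑ c, f a b c) = ∑ a, ∑ b, ∑ c, f b a c := Finset.sum_comm

lemma sum3_p23 (f : N → N → N → ℝ) :
    (∑ a, ∑ b, ∑ c, f a b c) = ∑ a, ∑ b, ∑ c, f a c b :=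
  Finset.sum_congr rfl fun a _ => Finset.sum_comm

lemma sum3_p231 (f : N → N → N → ℝ) :
    (∑ a, ∑ b, ∑ c, f a b c) = ∑ a, ∑ b, ∑ c, f b c a :=
  (sum3_p23 f).trans (sum3_p12 (fun a b c => f a c b))

lemma sum3_p132 (f : N → N → N → ℝ) :
    (∑ a, ∑ b, ∑ c, f a b c) = ∑ a, ∑ b, ∑ c, f c a b :=
  (sum3_p12 f).trans (sum3_p23 (fun a b c => f b a c))

lemma sum3_p13 (f : N → N → N → ℝ) :
    (∑ a, ∑ b, ∑ c, f a b c) = ∑ a, ∑ b, ∑ c, f c b a :=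
  (sum3_p231 f).trans (sum3_p23 (fun a b c => f b c a))

lemma comb6 (A1 A2 A3 B1 B2 B3 : N → N → ℝ)
    (h : ∀ p q : N,
      (A1 p q + A1 q p) + ((A2 p q + A2 q p) + ((A3 p q + A3 q p)
        + (2 * (B1 p q + B1 q p) + (2 * (B2 p q + B2 q p) + 2 * (B3 p q + B3 q p))))) = 0) :
    ((1/4) * (∑ p, ∑ q, A1 p q) + (1/2) * (∑ p, ∑ q, B1 p q)
      + ((1/4) * (∑ p, ∑ q, A2 p q) + (1/2) * (∑ p, ∑ q, B2 p q)))
      + ((1/4) * (∑ p, ∑ q, A3 p q) + (1/2) * (∑ p, ∑ q, B3 p q)) = 0 := by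
  have h1 : (∑ p, ∑ q, ((A1 p q + A1 q p) + ((A2 p q + A2 q p) + ((A3 p q + A3 q p)
        + (2 * (B1 p q + B1 q p) + (2 * (B2 p q + B2 q p) + 2 * (B3 p q + B3 q p))))))) = 0 := by
    rw [sum2_congr h]
    simp
  simp only [Finset.sum_add_distrib, sum_cmul] at h1
  linarith [h1, sum2_swap A1, sum2_swap A2, sum2_swap A3,
    sum2_swap B1, sum2_swap B2, sum2_swap B3]

lemma combR (A D1 D2 E1 E2 : N → N → N → ℝ)
    (hD : ∀ p q : N, (∑ k, (D1 k p q + D2 k p q)) = 0)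
    (h : ∀ k p q : N,
      ((1/4) * A k p q - (1/2) * (E1 k p q + E2 k p q))
      + (((1/4) * A k q p - (1/2) * (E1 k q p + E2 k q p))
      + (((1/4) * A p k q - (1/2) * (E1 p k q + E2 p k q))
      + (((1/4) * A p q k - (1/2) * (E1 p q k + E2 p q k))
      + (((1/4) * A q k p - (1/2) * (E1 q k p + E2 q k p))
      + ((1/4) * A q p k - (1/2) * (E1 q p k + E2 q p k)))))) = 0) :
    (∑ k, ((1/4) * (∑ p, ∑ q, A k p q)
      + (1/2) * (∑ p, ∑ q, (D1 k p q + D2 k p q - E1 k p q - E2 k p q)))) = 0 := by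
  have hDz : (∑ k, ∑ p, ∑ q, (D1 k p q + D2 k p q)) = 0 := by
    rw [sum3_rot]
    rw [sum2_congr hD]
    simp
  have hG : (∑ k, ∑ p, ∑ q,
      (((1/4) * A k p q - (1/2) * (E1 k p q + E2 k p q))
      + (((1/4) * A k q p - (1/2) * (E1 k q p + E2 k q p))
      + (((1/4) * A p k q - (1/2) * (E1 p k q + E2 p k q))
      + (((1/4) * A p q k - (1/2) * (E1 p q k + E2 p q k))
      + (((1/4) * A q k p - (1/2) * (E1 q k p + E2 q k p))
      + ((1/4) * A q p k - (1/2) * (E1 q p k + E2 q p k)))))))) = 0 := by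
    rw [sum3_congr h]
    simp
  simp only [Finset.sum_add_distrib, Finset.sum_sub_distrib, sum_cmul] at hDz hG ⊢
  linarith [hDz, hG,
    sum3_p23 A, sum3_p12 A, sum3_p231 A, sum3_p132 A, sum3_p13 A,
    sum3_p23 E1, sum3_p12 E1, sum3_p231 E1, sum3_p132 E1, sum3_p13 E1,
    sum3_p23 E2, sum3_p12 E2, sum3_p231 E2, sum3_p132 E2, sum3_p13 E2]

lemma Qbil_anti1 (R S : N → N → N → N → ℝ) (hR : IsCurvOp R) (hS : IsCurvOp S)
    (i j k l : N) : Qbil R S j i k l = - Qbil R S i j k l := by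
  obtain ⟨hR1, hR2, hR3, hR4⟩ := hR
  obtain ⟨hS1, hS2, hS3, hS4⟩ := hS
  simp only [Qbil_eq]
  rw [show (∑ p, ∑ q, (R j i p q * S k l p q + S j i p q * R k l p q)) = ∑ p, ∑ q, -(R i j p q * S k l p q + S i j p q * R k l p q) from
    sum2_congr fun p q => by
      linear_combination (S k l p q) * hR1 i j p q + (R k l p q) * hS1 i j p q]
  rw [show (∑ p, ∑ q, (R j p k q * S i p l q + S j p k q * R i p l q - R j p l q * S i p k q - S j p l q * R i p k q)) = ∑ p, ∑ q, -(R i p k q * S j p l q + S i p k q * R j p l q - R i p l q * S j p k q - S i p l q * R j p k q) from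
    sum2_congr fun p q => by ring]
  simp only [Finset.sum_neg_distrib]
  ring

lemma Qbil_anti2 (R S : N → N → N → N → ℝ) (hR : IsCurvOp R) (hS : IsCurvOp S)
    (i j k l : N) : Qbil R S i j l k = - Qbil R S i j k l := by
  obtain ⟨hR1, hR2, hR3, hR4⟩ := hR
  obtain ⟨hS1, hS2, hS3, hS4⟩ := hS
  simp only [Qbil_eq]
  rw [show (∑ p, ∑ q, (R i j p q * S l k p q + S i j p q * R l k p q)) = ∑ p, ∑ q, -(R i j p q * S k l p q + S i j p q * R k l p q) from
    sum2_congr fun p q => by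
      linear_combination (R i j p q) * hS1 k l p q + (S i j p q) * hR1 k l p q]
  rw [show (∑ p, ∑ q, (R i p l q * S j p k q + S i p l q * R j p k q - R i p k q * S j p l q - S i p k q * R j p l q)) = ∑ p, ∑ q, -(R i p k q * S j p l q + S i p k q * R j p l q - R i p l q * S j p k q - S i p l q * R j p k q) from
    sum2_congr fun p q => by ring]
  simp only [Finset.sum_neg_distrib]
  ring

lemma Qbil_pair (R S : N → N → N → N → ℝ) (hR : IsCurvOp R) (hS : IsCurvOp S)
    (i j k l : N) : Qbil R S k l i j = Qbil R S i j k l := by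
  obtain ⟨hR1, hR2, hR3, hR4⟩ := hR
  obtain ⟨hS1, hS2, hS3, hS4⟩ := hS
  simp only [Qbil_eq]
  rw [show (∑ p, ∑ q, (R k l p q * S i j p q + S k l p q * R i j p q)) = ∑ p, ∑ q, (R i j p q * S k l p q + S i j p q * R k l p q) from
    sum2_congr fun p q => by ring]
  rw [show (∑ p, ∑ q, (R k p i q * S l p j q + S k p i q * R l p j q - R k p j q * S l p i q - S k p j q * R l p i q)) = ∑ p, ∑ q, (R i q k p * S j q l p + S i q k p * R j q l p - R i q l p * S j q k p - S i q l p * R j q k p) from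
    sum2_congr fun p q => by
      linear_combination (1 : ℝ) * (S l p j q) * (hR3 i q k p) + (1 : ℝ) * (S k p i q) * (hR3 j q l p) + (-1 : ℝ) * (S l p i q) * (hR3 j q k p) + (-1 : ℝ) * (S k p j q) * (hR3 i q l p) + (1 : ℝ) * (R i q k p) * (hS3 j q l p) + (1 : ℝ) * (R j q l p) * (hS3 i q k p) + (-1 : ℝ) * (R j q k p) * (hS3 i q l p) + (-1 : ℝ) * (R i q l p) * (hS3 j q k p)]
  rw [← sum2_swap (fun p q => (R i p k q * S j p l q + S i p k q * R j p l q - R i p l q * S j p k q - S i p l q * R j p k q))]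

lemma Qbil_bianchi (R S : N → N → N → N → ℝ) (hR : IsCurvOp R) (hS : IsCurvOp S)
    (i j k l : N) :
    Qbil R S i j k l + Qbil R S j k i l + Qbil R S k i j l = 0 := by
  obtain ⟨hR1, hR2, hR3, hR4⟩ := hR
  obtain ⟨hS1, hS2, hS3, hS4⟩ := hS
  simp only [Qbil_eq]
  exact comb6 (fun p q => (R i j p q * S k l p q + S i j p q * R k l p q)) (fun p q => (R j k p q * S i l p q + S j k p q * R i l p q))
    (fun p q => (R k i p q * S j l p q + S k i p q * R j l p q)) (fun p q => (R i p k q * S j p l q + S i p k q * R j p l q - R i p l q * S j p k q - S i p l q * R j p k q))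
    (fun p q => (R j p i q * S k p l q + S j p i q * R k p l q - R j p l q * S k p i q - S j p l q * R k p i q)) (fun p q => (R k p j q * S i p l q + S k p j q * R i p l q - R k p l q * S i p j q - S k p l q * R i p j q))
    (fun p q => by
      linear_combination (2 : ℝ) * (S k p l q) * (hR3 i q j p) + (2 : ℝ) * (R k p l q) * (hS3 i q j p) + (-2 : ℝ) * (R j p l q) * (hS3 i q k p) + (-2 : ℝ) * (S j p l q) * (hR3 i q k p) + (1 : ℝ) * (S j l p q) * (hR1 i k p q) + (1 : ℝ) * (R j l p q) * (hS1 i k p q) + (2 : ℝ) * (S i p l q) * (hR3 j q k p) + (2 : ℝ) * (R i p l q) * (hS3 j q k p) + (1 : ℝ) * (S k l q p) * (hR2 i j p q) + (1 : ℝ) * (S i j q p) * (hR2 k l p q) + (1 : ℝ) * (S i l q p) * (hR2 j k p q) + (1 : ℝ) * (S j k q p) * (hR2 i l p q) + (2 : ℝ) * (S k q l p) * (hR3 i p j q) + (2 : ℝ) * (R k q l p) * (hS3 i p j q) + (-2 : ℝ) * (R j q l p) * (hS3 i p k q) + (-2 : ℝ) * (S j q l p) * (hR3 i p k q) + (1 :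 ℝ) * (S j l q p) * (hR1 i k q p) + (1 : ℝ) * (S k i q p) * (hR2 j l p q) + (2 : ℝ) * (S i q l p) * (hR3 j p k q) + (2 : ℝ) * (R i q l p) * (hS3 j p k q) + (-1 : ℝ) * (R i j p q) * (hS2 k l p q) + (-1 : ℝ) * (R k l p q) * (hS2 i j p q) + (-1 : ℝ) * (R j k p q) * (hS2 i l p q) + (-1 : ℝ) * (R i l p q) * (hS2 j k p q) + (-1 : ℝ) * (S j l q p) * (hR2 i k p q) + (-1 : ℝ) * (R j l p q) * (hS1 i k q p) + (1 : ℝ) * (R i k p q) * (hS2 j l p q) + (1 : ℝ) * (R j l p q) * (hS2 i k p q) + (2 : ℝ) * (R i j p q) * (hS4 k l p q) + (-2 : ℝ) * (R i j p q) * (hS3 k q l p) + (-2 : ℝ) * (R i j p q) * (hS1 k p l q) + (2 : ℝ) * (R k l p q) * (hS4 i j p q) + (-2 : ℝ) * (R k l p q) * (hS3 i q j p) + (-2 : ℝ) * (R k l p q) * (hS1 i p j q) + (2 : ℝ) * (R i p k q) * (hS4 j p l q) + (-2 : ℝ) * (R i p k q) * (hS1 l p j q) + (-2 : ℝ) * (R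 i p k q) * (hS1 j l p q) + (2 : ℝ) * (R i p k q) * (hS3 j q l p) + (2 : ℝ) * (R j p l q) * (hS4 i p k q) + (-2 : ℝ) * (R j p l q) * (hS1 k p i q) + (-2 : ℝ) * (R j p l q) * (hS1 i k p q) + (2 : ℝ) * (R j p l q) * (hS3 i q k p) + (-2 : ℝ) * (S j p k q) * (hR4 i p l q) + (2 : ℝ) * (S j p k q) * (hR1 l p i q) + (2 : ℝ) * (S j p k q) * (hR1 i l p q) + (-2 : ℝ) * (S j p k q) * (hR3 i q l p) + (-2 : ℝ) * (S i p l q) * (hR4 j p k q) + (2 : ℝ) * (S i p l q) * (hR1 k p j q) + (2 : ℝ) * (S i p l q) * (hR1 j k p q) + (-2 : ℝ) * (S i p l q) * (hR3 j q k p) + (2 : ℝ) * (R j k p q) * (hS4 i l p q) + (-2 : ℝ) * (R j k p q) * (hS3 i q l p) + (-2 : ℝ) * (R j k p q) * (hS1 i p l q) + (2 : ℝ) * (R i l p q) * (hS4 j k p q) + (-2 : ℝ) * (R i l p q) * (hS3 j q k p) + (-2 : ℝ) * (R i l p q) * (hS1 j p k q) + (-2 : ℝ) * (S i p j q) * (hR4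 k p l q) + (2 : ℝ) * (S i p j q) * (hR1 l p k q) + (2 : ℝ) * (S i p j q) * (hR1 k l p q) + (-2 : ℝ) * (S i p j q) * (hR3 k q l p) + (-2 : ℝ) * (S k p l q) * (hR4 i p j q) + (2 : ℝ) * (S k p l q) * (hR1 j p i q) + (2 : ℝ) * (S k p l q) * (hR1 i j p q) + (-2 : ℝ) * (S k p l q) * (hR3 i q j p) + (2 : ℝ) * (R i q k p) * (hS4 j q l p) + (-2 : ℝ) * (R i q k p) * (hS1 l q j p) + (-2 : ℝ) * (R i q k p) * (hS1 j l q p) + (2 : ℝ) * (R i q k p) * (hS3 j p l q) + (2 : ℝ) * (R i q k p) * (hS2 j l p q) + (2 : ℝ) * (R j q l p) * (hS4 i q k p) + (-2 : ℝ) * (R j q l p) * (hS1 k q i p) + (-2 : ℝ) * (R j q l p) * (hS1 i k q p) + (2 : ℝ) * (R j q l p) * (hS3 i p k q) + (2 : ℝ) * (R j q l p) * (hS2 i k p q) + (-2 : ℝ) * (S j q k p) * (hR4 i q l p) + (2 : ℝ) * (S j q k p) * (hR1 l q i p) + (2 : ℝ) * (S j q k p) * (hR1 i l q p) + (-2 :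 ℝ) * (S j q k p) * (hR3 i p l q) + (-2 : ℝ) * (S j q k p) * (hR2 i l p q) + (-2 : ℝ) * (S i q l p) * (hR4 j q k p) + (2 : ℝ) * (S i q l p) * (hR1 k q j p) + (2 : ℝ) * (S i q l p) * (hR1 j k q p) + (-2 : ℝ) * (S i q l p) * (hR3 j p k q) + (-2 : ℝ) * (S i q l p) * (hR2 j k p q) + (-2 : ℝ) * (S i q j p) * (hR4 k q l p) + (2 : ℝ) * (S i q j p) * (hR1 l q k p) + (2 : ℝ) * (S i q j p) * (hR1 k l q p) + (-2 : ℝ) * (S i q j p) * (hR3 k p l q) + (-2 : ℝ) * (S i q j p) * (hR2 k l p q) + (-2 : ℝ) * (S k q l p) * (hR4 i q j p) + (2 : ℝ) * (S k q l p) * (hR1 j q i p) + (2 : ℝ) * (S k q l p) * (hR1 i j q p) + (-2 : ℝ) * (S k q l p) * (hR3 i p j q) + (-2 : ℝ) * (S k q l p) * (hR2 i j p q) + (-2 : ℝ) * (S j l p q) * (hR4 i k p q) + (2 : ℝ) * (S j l p q) * (hR3 i q k p) + (2 : ℝ) * (S j l p q) * (hR1 i p k q) + (-2 : ℝ) * (S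 i k p q) * (hR4 j l p q) + (2 : ℝ) * (S i k p q) * (hR3 j q l p) + (2 : ℝ) * (S i k p q) * (hR1 j p l q))

lemma Qbil_ric (R S : N → N → N → N → ℝ) (hR : IsCurvOp R) (hS : IsCurvOp S)
    (hr : ∀ a b : N, ric R a b = 0) (hs : ∀ a b : N, ric S a b = 0)
    (i j : N) : ric (Qbil R S) i j = 0 := by
  obtain ⟨hR1, hR2, hR3, hR4⟩ := hR
  obtain ⟨hS1, hS2, hS3, hS4⟩ := hS
  simp only [ric, Qbil_eq]
  exact combR (fun k p q => (R i k p q * S j k p q + S i k p q * R j k p q))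
    (fun k p q => R i p j q * S k p k q) (fun k p q => S i p j q * R k p k q)
    (fun k p q => R i p k q * S k p j q) (fun k p q => S i p k q * R k p j q)
    (fun p q => by
      have e1 : (∑ k, S k p k q) = 0 := by
        rw [show (∑ k, S k p k q) = ∑ k, S p k q k from
          Finset.sum_congr rfl fun m _ => by
            linear_combination hS1 p m m q - hS2 p m q m]
        rw [ric_spec]
        exact hs p q
      have e2 : (∑ k, R k p k q) = 0 := by
        rw [show (∑ k, R k p k q) = ∑ k, R p k q k from
          Finset.sum_congr rfl fun m _ => by
            linear_combination hR1 p m m q - hR2 p m q m]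
        rw [ric_spec]
        exact hr p q
      rw [Finset.sum_add_distrib]
      simp only [sum_cmul]
      rw [e1, e2]
      ring)
    (fun k p q => by
      linear_combination ((-1 : ℝ)/2) * (R i p k q) * (hS3 j q k p) + ((-1 : ℝ)/2) * (S i p k q) * (hR3 j q k p) + ((1 : ℝ)/4) * (S j k q p) * (hR2 i k p q) + ((1 : ℝ)/4) * (S i k q p) * (hR2 j k p q) + ((-1 : ℝ)/2) * (R i q k p) * (hS3 j p k q) + ((-1 : ℝ)/2) * (S i q k p) * (hR3 j p k q) + ((-1 : ℝ)/2) * (R i k p q) * (hS1 k p j q) + ((-1 : ℝ)/2) * (S i k p q) * (hR1 k p j q) + ((1 : ℝ)/4) * (S j p q k) * (hR2 i p k q) + ((1 : ℝ)/4) * (S i p q k) * (hR2 j p k q) + ((-1 : ℝ)/2) * (S p q j k) * (hR2 i q k p) + ((-1 : ℝ)/2) * (S i q p k) * (hR3 j k p q) + ((-1 : ℝ)/2) * (S q k j p) * (hR2 i k p q) + ((-1 : ℝ)/2) * (S i k q p) * (hR1 k q j p) + ((1 : ℝ)/4) * (S j q p k) * (hR2 i q k p) + ((1 : ℝ)/4)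 * (S i q p k) * (hR2 j q k p) + ((-1 : ℝ)/2) * (S q p j k) * (hR2 i p k q) + ((-1 : ℝ)/2) * (S i p q k) * (hR1 p q j k) + ((-1 : ℝ)/4) * (R i k p q) * (hS2 j k p q) + ((-1 : ℝ)/4) * (R j k p q) * (hS2 i k p q) + ((1 : ℝ)/2) * (R i k p q) * (hS3 j q k p) + ((1 : ℝ)/2) * (S i k p q) * (hR3 j q k p) + ((-1 : ℝ)/4) * (R i p k q) * (hS2 j p k q) + ((-1 : ℝ)/4) * (R j p k q) * (hS2 i p k q) + ((1 : ℝ)/2) * (R i q k p) * (hS3 j k p q) + ((-1 : ℝ)/2) * (R j k p q) * (hS2 i q k p) + ((1 : ℝ)/2) * (R i k p q) * (hS1 k q j p) + ((1 : ℝ)/2) * (S i k q p) * (hR3 j p k q) + ((-1 : ℝ)/4) * (R i q k p) * (hS2 j q k p) + ((-1 : ℝ)/4) * (R j q k p) * (hS2 i q k p) + ((1 : ℝ)/2) * (R i p k q) * (hS1 p q j k) + ((1 : ℝ)/2) * (S i p q k) * (hR3 j k p q) + ((-1 : ℝ)/2) * (R i k p q) * (hS3 j p k q) + ((1 : ℝ)/2)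 * (R j p k q) * (hS2 i k p q) + ((-1 : ℝ)/2) * (R i p k q) * (hS3 j k p q) + ((1 : ℝ)/2) * (R j k p q) * (hS2 i p k q) + ((1 : ℝ)/2) * (S j k p q) * (hR4 i k p q) + ((-1 : ℝ)/2) * (S j k p q) * (hR3 i q k p) + ((-1 : ℝ)/2) * (S j k p q) * (hR1 i p k q) + ((1 : ℝ)/2) * (S i k p q) * (hR4 j k p q) + ((-1 : ℝ)/2) * (S i k p q) * (hR3 j q k p) + ((-1 : ℝ)/2) * (S i k p q) * (hR1 j p k q) + ((1 : ℝ)/2) * (S j p k q) * (hR4 i p k q) + ((-1 : ℝ)/2) * (S j p k q) * (hR1 k p i q) + ((-1 : ℝ)/2) * (S j p k q) * (hR1 i k p q) + ((1 : ℝ)/2) * (S j p k q) * (hR3 i q k p) + ((1 : ℝ)/2) * (S i p k q) * (hR4 j p k q) + ((-1 : ℝ)/2) * (S i p k q) * (hR1 k p j q) + ((-1 : ℝ)/2) * (S i p k q) * (hR1 j k p q) + ((1 : ℝ)/2) * (S i p k q) * (hR3 j q k p) + ((1 : ℝ)/2) * (S j q k p) * (hR4 i q k p) + ((-1 : ℝ)/2)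 * (S j q k p) * (hR1 k q i p) + ((-1 : ℝ)/2) * (S j q k p) * (hR1 i k q p) + ((1 : ℝ)/2) * (S j q k p) * (hR3 i p k q) + ((1 : ℝ)/2) * (S j q k p) * (hR2 i k p q) + ((1 : ℝ)/2) * (S i q k p) * (hR4 j q k p) + ((-1 : ℝ)/2) * (S i q k p) * (hR1 k q j p) + ((-1 : ℝ)/2) * (S i q k p) * (hR1 j k q p) + ((1 : ℝ)/2) * (S i q k p) * (hR3 j p k q) + ((1 : ℝ)/2) * (S i q k p) * (hR2 j k p q))

lemma lemB (T : N → N → ℝ) (S : N → N → N → N → ℝ) (hT : ∀ a b, T a b = T b a)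
    (hS : IsCurvOp S) (hs : ∀ a b : N, ric S a b = 0) (i j k l : N) :
    Qbil (wedge T kd) S i j k l
      = wedge (fun a b => (1/2) * ∑ p, ∑ q, T p q * S a p b q) kd i j k l := by
  obtain ⟨hS1, hS2, hS3, hS4⟩ := hS
  rw [Qbil_eq]
  rw [show (∑ p, ∑ q, (wedge T kd i j p q * S k l p q + S i j p q * wedge T kd k l p q))
      = (∑ p, ∑ q, wedge T kd i j p q * S k l p q)
        + (∑ p, ∑ q, S i j p q * wedge T kd k l p q) from
    sum2_add _ _]
  rw [show (∑ p, ∑ q, (wedge T kd i p k q * S j p l q + S i p k q * wedge T kd j p l q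
        - wedge T kd i p l q * S j p k q - S i p l q * wedge T kd j p k q))
      = ((∑ p, ∑ q, wedge T kd i p k q * S j p l q)
        + (∑ p, ∑ q, S i p k q * wedge T kd j p l q))
        - (∑ p, ∑ q, wedge T kd i p l q * S j p k q)
        - (∑ p, ∑ q, S i p l q * wedge T kd j p k q) from by
    simp only [Finset.sum_add_distrib, Finset.sum_sub_distrib]]
  rw [sumL T S i j k l, sumR T S i j k l,
      sumSh1 T S i j k l, sumSh2 T S i j k l, sumSh1 T S i j l k, sumSh2 T S i j l k]
  simp only [hs, mul_zero, zero_mul, sub_zero, add_zero, zero_add, mul_add, mul_sub]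
  have hz : (∑ p : N, (
      (1/8) * (T i p * S k l p j) + (1/8) * (T j p * S k l i p)
      - (1/8) * (T i p * S k l j p) - (1/8) * (T j p * S k l p i)
      + (1/8) * (T k p * S i j p l) + (1/8) * (T l p * S i j k p)
      - (1/8) * (T k p * S i j l p) - (1/8) * (T l p * S i j p k)
      - (1/4) * (T i p * S j k l p) - (1/4) * (T p k * S j p l i)
      - (1/4) * (T j p * S i l k p) - (1/4) * (T p l * S i p k j)
      + (1/4) * (T i p * S j l k p) + (1/4) * (T p l * S j p k i)
      + (1/4) * (T j p * S i k l p) + (1/4) * (T p k * S i p l j))) = 0 := by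
    rw [show (∑ p : N, (
      (1/8) * (T i p * S k l p j) + (1/8) * (T j p * S k l i p)
      - (1/8) * (T i p * S k l j p) - (1/8) * (T j p * S k l p i)
      + (1/8) * (T k p * S i j p l) + (1/8) * (T l p * S i j k p)
      - (1/8) * (T k p * S i j l p) - (1/8) * (T l p * S i j p k)
      - (1/4) * (T i p * S j k l p) - (1/4) * (T p k * S j p l i)
      - (1/4) * (T j p * S i l k p) - (1/4) * (T p l * S i p k j)
      + (1/4) * (T i p * S j l k p) + (1/4) * (T p l * S j p k i)
      + (1/4) * (T j p * S i k l p) + (1/4) * (T p k * S i p l j))) = ∑ p : N, (0:ℝ) from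
      Finset.sum_congr rfl fun p _ => by
        linear_combination ((-1 : ℝ)/4) * (S j p l i) * (hT p k) + ((-1 : ℝ)/4) * (S i p k j) * (hT p l) + ((1 : ℝ)/4) * (S j p k i) * (hT p l) + ((1 : ℝ)/4) * (S i p l j) * (hT p k) + ((1 : ℝ)/8) * (T i p) * (hS2 k l j p) + ((1 : ℝ)/8) * (T j p) * (hS3 i p k l) + ((-1 : ℝ)/4) * (T i p) * (hS3 j p k l) + ((-1 : ℝ)/8) * (T j p) * (hS2 k l i p) + ((1 : ℝ)/8) * (T k p) * (hS2 i j l p) + ((-1 : ℝ)/8) * (T l p) * (hS2 i j k p) + ((-1 : ℝ)/4) * (T k p) * (hS2 j p i l) + ((-1 : ℝ)/4) * (T l p) * (hS2 i p j k) + ((1 : ℝ)/4) * (T l p) * (hS2 j p i k) + ((1 : ℝ)/4) * (T k p) * (hS2 i p j l) + ((1 : ℝ)/8) * (T j p) * (hS3 i p k l) + ((1 : ℝ)/4) * (T k p) * (hS3 i l j p) + ((-1 : ℝ)/4) * (T l p) * (hS3 i k j p) + ((1 : ℝ)/4) * (T l p) * (hS4 i j k p) + ((-1 : ℝ)/4)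 * (T l p) * (hS3 i p j k) + ((-1 : ℝ)/4) * (T l p) * (hS1 i k j p) + ((-1 : ℝ)/4) * (T k p) * (hS4 i j l p) + ((1 : ℝ)/4) * (T k p) * (hS3 i p j l) + ((1 : ℝ)/4) * (T k p) * (hS1 i l j p) + ((-1 : ℝ)/4) * (T i p) * (hS4 j k l p) + ((1 : ℝ)/4) * (T i p) * (hS3 j p k l) + ((1 : ℝ)/4) * (T i p) * (hS1 j l k p) + ((-1 : ℝ)/4) * (T j p) * (hS4 i l k p) + ((1 : ℝ)/4) * (T j p) * (hS1 k l i p) + ((1 : ℝ)/4) * (T j p) * (hS1 i k l p) + ((-1 : ℝ)/4) * (T j p) * (hS3 i p k l)]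
    simp
  simp only [wedge]
  simp only [Finset.sum_add_distrib, Finset.sum_sub_distrib, sum_cmul] at hz ⊢
  linarith [hz]

lemma Phi_symm (T : N → N → ℝ) (S : N → N → N → N → ℝ) (hT : ∀ a b, T a b = T b a)
    (hS : IsCurvOp S) (a b : N) :
    (∑ p, ∑ q, T p q * S a p b q) = ∑ p, ∑ q, T p q * S b p a q := by
  obtain ⟨hS1, hS2, hS3, hS4⟩ := hS
  rw [show (∑ p, ∑ q, T p q * S b p a q) = ∑ p, ∑ q, T p q * S a q b p from
    sum2_congr fun p q => by linear_combination (T p q) * hS3 a q b p]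
  rw [sum2_swap (fun p q => T p q * S a q b p)]
  exact sum2_congr fun p q => by linear_combination (S a p b q) * hT p q

lemma Phi_trace (T : N → N → ℝ) (S : N → N → N → N → ℝ)
    (hS : IsCurvOp S) (hs : ∀ a b : N, ric S a b = 0) :
    (∑ a, ∑ p, ∑ q, T p q * S a p a q) = 0 := by
  obtain ⟨hS1, hS2, hS3, hS4⟩ := hS
  rw [sum3_rot (fun a p q => T p q * S a p a q)]
  rw [show (∑ p, ∑ q, ∑ a, T p q * S a p a q) = ∑ p, ∑ q, (0:ℝ) from
    sum2_congr fun p q => by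
      rw [sum_cmul]
      rw [show (∑ a, S a p a q) = ∑ a, S p a q a from
        Finset.sum_congr rfl fun m _ => by
          linear_combination hS1 p m m q - hS2 p m q m]
      rw [ric_spec, hs p q, mul_zero]]
  simp

lemma part4 {n : ℕ} (R S : Fin n → Fin n → Fin n → Fin n → ℝ)
    (hR : R ∈ spanW n) (hS : S ∈ spanW n) : Qbil R S ∈ spanW n := by
  obtain ⟨hRc, hr⟩ := hR
  obtain ⟨hSc, hs⟩ := hS
  exact ⟨⟨fun i j k l => Qbil_anti1 R S hRc hSc i j k l,
    fun i j k l => Qbil_anti2 R S hRc hSc i j k l,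
    fun i j k l => Qbil_pair R S hRc hSc i j k l,
    fun i j k l => Qbil_bianchi R S hRc hSc i j k l⟩,
    fun i j => Qbil_ric R S hRc hSc hr hs i j⟩

lemma part5 {n : ℕ} (R S : Fin n → Fin n → Fin n → Fin n → ℝ)
    (hR : R ∈ spanRic0 n) (hS : S ∈ spanW n) : Qbil R S ∈ spanRic0 n := by
  obtain ⟨T, hT, hTr, hRe⟩ := hR
  obtain ⟨hSc, hs⟩ := hS
  have hRe' : R = wedge T kd := by
    funext a b c d; exact hRe a b c d
  subst hRe'
  refine ⟨fun a b => (1/2) * ∑ p, ∑ q, T p q * S a p b q, fun a b => ?_, ?_, fun i j k l => ?_⟩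
  · simp only []
    rw [Phi_symm T S hT hSc a b]
  · simp only []
    rw [show (∑ a : Fin n, (1/2) * ∑ p, ∑ q, T p q * S a p a q)
        = (1/2) * ∑ a : Fin n, ∑ p, ∑ q, T p q * S a p a q from sum_cmul _ _]
    rw [Phi_trace T S hSc hs]
    ring
  · exact lemB T S hT hSc hs i j k l


/-- Behaviour of the bilinear map `Q(·,·)` on the irreducible pieces of the
decomposition of algebraic curvature operators. -/
theorem stmt4 {n : ℕ} (hn : 4 ≤ n) :
    (∀ R S, R ∈ spanI n → S ∈ spanI n → Qbil R S ∈ spanI n) ∧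
    (∀ R S, R ∈ spanI n → S ∈ spanRic0 n → Qbil R S ∈ spanRic0 n) ∧
    (∀ R S, R ∈ spanI n → S ∈ spanW n → ∀ i j k l, Qbil R S i j k l = 0) ∧
    (∀ R S, R ∈ spanW n → S ∈ spanW n → Qbil R S ∈ spanW n) ∧
    (∀ R S, R ∈ spanRic0 n → S ∈ spanW n → Qbil R S ∈ spanRic0 n) := by
  exact ⟨fun R S hR hS => part1 R S hR hS,
    fun R S hR hS => part2 R S hR hS,
    fun R S hR hS => part3 R S hR hS,
    fun R S hR hS => part4 R S hR hS,
    fun R S hR hS => part5 R S hR hS⟩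

end Work

end PaperStmt
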